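/- Let F : F_{2^n} → F_{2^n} and x_0 ∈ F_{2^n}. Then F is x_0-APN if and only if Σ_{a,b ∈ F_{2^n}} W_F(a,b)^3 · (−1)^{Tr(a·x_0 + b·F(x_0))} = 2^{2n+1}·(3·2^{n−1} − 1). -/

import Mathlib

open scoped Classical

noncomputable instance (n : ℕ) : Fintype (GaloisField 2 n) := Fintype.ofFinite _

/-- The absolute trace of `F_{2^n}` over `F_2`. -/
noncomputable def fieldTr (n : ℕ) (x : GaloisField 2 n) : ZMod 2 :=
  Algebra.trace (ZMod 2) (GaloisField 2 n) x

/-- `(-1)^{Tr(x)}` as an integer. -/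
noncomputable def chi (n : ℕ) (x : GaloisField 2 n) : ℤ :=
  (-1) ^ (fieldTr n x).val

/-- The Walsh transform `W_F(a,b)`. -/
noncomputable def walsh (n : ℕ) (F : GaloisField 2 n → GaloisField 2 n)
    (a b : GaloisField 2 n) : ℤ :=
  ∑ x : GaloisField 2 n, chi n (b * F x + a * x)

/-- `F` is almost perfect nonlinear. -/
def IsAPN (n : ℕ) (F : GaloisField 2 n → GaloisField 2 n) : Prop :=
  ∀ a b : GaloisField 2 n, a ≠ 0 →
    Nat.card {x : GaloisField 2 n // F (x + a) + F x = b} ≤ 2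

/-- `F` is partially APN at the point `x₀`. -/
def IsPAPN (n : ℕ) (F : GaloisField 2 n → GaloisField 2 n) (x₀ : GaloisField 2 n) : Prop :=
  ∀ u v : GaloisField 2 n, F x₀ + F u + F v + F (x₀ + u + v) = 0 →
    (x₀ + u) * (x₀ + v) * (u + v) = 0

/-- The `(x₀, ε)`-modification of `F`. -/
noncomputable
def pointModify (n : ℕ) (F : GaloisField 2 n → GaloisField 2 n) (x₀ ε : GaloisField 2 n) :
    GaloisField 2 n → GaloisField 2 n :=
  fun x => if x = x₀ then F x₀ + ε else F x

/-- `E_F(a,b) = (-1)^{Tr(a x₀ + b y₀)} (1 - (-1)^{Tr(b ε)})`. -/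
noncomputable def EF (n : ℕ) (F : GaloisField 2 n → GaloisField 2 n)
    (x₀ ε a b : GaloisField 2 n) : ℤ :=
  chi n (a * x₀ + b * F x₀) * (1 - chi n (b * ε))

lemma chi_add (n : ℕ) (x y : GaloisField 2 n) : chi n (x + y) = chi n x * chi n y := by
  unfold chi
  have h : fieldTr n (x + y) = fieldTr n x + fieldTr n y := map_add _ x y
  rw [h]
  generalize fieldTr n x = a
  generalize fieldTr n y = b
  revert a b
  decide

lemma chi_zero (n : ℕ) : chi n (0 : GaloisField 2 n) = 1 := by
  unfold chi fieldTr
  rw [map_zero]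
  rfl

lemma card_gf (n : ℕ) (hn : 0 < n) : Fintype.card (GaloisField 2 n) = 2 ^ n := by
  rw [← Nat.card_eq_fintype_card]; exact GaloisField.card 2 n hn.ne'

lemma sum_chi (n : ℕ) (hn : 0 < n) (c : GaloisField 2 n) :
    ∑ a : GaloisField 2 n, chi n (a * c) = if c = 0 then ((2 : ℤ) ^ n) else 0 := by
  split_ifs with hc
  · subst hc
    simp only [mul_zero, chi_zero, Finset.sum_const, Finset.card_univ, nsmul_eq_mul, mul_one]
    rw [card_gf n hn]
    push_cast
    ring
  · obtain ⟨a₀, ha₀⟩ : ∃ a₀, fieldTr n (a₀ * c) ≠ 0 := by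
      by_contra h
      push_neg at h
      exact hc ((traceForm_nondegenerate (ZMod 2) (GaloisField 2 n)).1 c
        (fun y => by simpa [Algebra.traceForm_apply, mul_comm, fieldTr] using h y))
    have hchi : chi n (a₀ * c) = -1 := by
      unfold chi
      revert ha₀
      generalize fieldTr n (a₀ * c) = t
      revert t
      decide
    have key : (∑ a : GaloisField 2 n, chi n (a * c))
        = - ∑ a : GaloisField 2 n, chi n (a * c) := by
      calc (∑ a : GaloisField 2 n, chi n (a * c))
          = ∑ a : GaloisField 2 n, chi n ((a + a₀) * c) :=
            (Fintype.sum_equiv (Equiv.addRight a₀)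
              (fun a => chi n ((a + a₀) * c)) (fun a => chi n (a * c))
              (fun a => rfl)).symm
        _ = ∑ a : GaloisField 2 n, chi n (a * c) * chi n (a₀ * c) := by
            refine Finset.sum_congr rfl fun a _ => ?_
            rw [add_mul, chi_add]
        _ = - ∑ a : GaloisField 2 n, chi n (a * c) := by
            simp only [hchi, mul_neg_one]
            exact Finset.sum_neg_distrib _
    linarith

lemma char2_add_eq_zero (n : ℕ) (a b : GaloisField 2 n) : a + b = 0 ↔ a = b := by
  rw [← CharTwo.sub_eq_add, sub_eq_zero]

lemma swap3 {α β γ : Type*} [Fintype α] [Fintype β] [Fintype γ]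
    (f : α → β → γ → ℤ) :
    (∑ a : α, ∑ b : β, ∑ x : γ, f a b x) = ∑ x : γ, ∑ a : α, ∑ b : β, f a b x := by
  calc (∑ a : α, ∑ b : β, ∑ x : γ, f a b x)
      = ∑ a : α, ∑ x : γ, ∑ b : β, f a b x :=
        Finset.sum_congr rfl fun a _ => Finset.sum_comm
    _ = ∑ x : γ, ∑ a : α, ∑ b : β, f a b x := Finset.sum_comm

theorem papn_iff_third_moment (n : ℕ) (hn : 0 < n) (F : GaloisField 2 n → GaloisField 2 n) (x₀ : GaloisField 2 n) :
    IsPAPN n F x₀ ↔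
      ∑ a : GaloisField 2 n, ∑ b : GaloisField 2 n,
          walsh n F a b ^ 3 * chi n (a * x₀ + b * F x₀) =
        2 ^ (2 * n + 1) * (3 * 2 ^ (n - 1) - 1) := by
  set q : ℤ := 2 ^ n with hq
  have self0 : ∀ x : (GaloisField 2 n), x + x = 0 := CharTwo.add_self_eq_zero
  -- step 1 : the sum equals q^2 * N
  have hchi4 : ∀ u v w e : (GaloisField 2 n),
      chi n (u + v + w + e) = chi n u * chi n v * chi n w * chi n e := by
    intro u v w e
    rw [chi_add, chi_add, chi_add]
  have point : ∀ a b x y z : (GaloisField 2 n),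
      chi n (b * F z + a * z) * chi n (b * F y + a * y) * chi n (b * F x + a * x) *
        chi n (a * x₀ + b * F x₀)
      = chi n (b * (F x₀ + F x + F y + F z) + a * (x₀ + x + y + z)) := by
    intro a b x y z
    rw [show b * (F x₀ + F x + F y + F z) + a * (x₀ + x + y + z)
        = (b * F z + a * z) + (b * F y + a * y) + (b * F x + a * x) + (a * x₀ + b * F x₀)
        from by ring, hchi4]
  have inner : ∀ A B : (GaloisField 2 n),
      (∑ a : (GaloisField 2 n), ∑ b : (GaloisField 2 n), chi n (b * B + a * A))
        = (if A = 0 then q else 0) * (if B = 0 then q else 0) := by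
    intro A B
    rw [← sum_chi n hn A, ← sum_chi n hn B, Finset.sum_mul_sum]
    refine Finset.sum_congr rfl fun a _ => Finset.sum_congr rfl fun b _ => ?_
    rw [show b * B + a * A = a * A + b * B from add_comm _ _, chi_add]
  have step1 :
      (∑ a : (GaloisField 2 n), ∑ b : (GaloisField 2 n), walsh n F a b ^ 3 * chi n (a * x₀ + b * F x₀))
        = q ^ 2 * ∑ x : (GaloisField 2 n), ∑ y : (GaloisField 2 n),
            (if F x₀ + F x + F y + F (x₀ + x + y) = 0 then (1 : ℤ) else 0) := by
    have expand : ∀ a b : (GaloisField 2 n), walsh n F a b ^ 3 * chi n (a * x₀ + b * F x₀)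
        = ∑ x : (GaloisField 2 n), ∑ y : (GaloisField 2 n), ∑ z : (GaloisField 2 n),
            chi n (b * (F x₀ + F x + F y + F z) + a * (x₀ + x + y + z)) := by
      intro a b
      rw [pow_succ, pow_succ, pow_one]
      unfold walsh
      simp only [Finset.sum_mul, Finset.mul_sum]
      exact Finset.sum_congr rfl fun x _ => Finset.sum_congr rfl fun y _ =>
        Finset.sum_congr rfl fun z _ => point a b x y z
    calc (∑ a : (GaloisField 2 n), ∑ b : (GaloisField 2 n), walsh n F a b ^ 3 * chi n (a * x₀ + b * F x₀))
        = ∑ a : (GaloisField 2 n), ∑ b : (GaloisField 2 n), ∑ x : (GaloisField 2 n), ∑ y : (GaloisField 2 n), ∑ z : (GaloisField 2 n),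
            chi n (b * (F x₀ + F x + F y + F z) + a * (x₀ + x + y + z)) :=
          Finset.sum_congr rfl fun a _ => Finset.sum_congr rfl fun b _ => expand a b
      _ = ∑ x : (GaloisField 2 n), ∑ a : (GaloisField 2 n), ∑ b : (GaloisField 2 n), ∑ y : (GaloisField 2 n), ∑ z : (GaloisField 2 n),
            chi n (b * (F x₀ + F x + F y + F z) + a * (x₀ + x + y + z)) := swap3 _
      _ = ∑ x : (GaloisField 2 n), ∑ y : (GaloisField 2 n), ∑ a : (GaloisField 2 n), ∑ b : (GaloisField 2 n), ∑ z : (GaloisField 2 n),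
            chi n (b * (F x₀ + F x + F y + F z) + a * (x₀ + x + y + z)) :=
          Finset.sum_congr rfl fun x _ => swap3 _
      _ = ∑ x : (GaloisField 2 n), ∑ y : (GaloisField 2 n), ∑ z : (GaloisField 2 n), ∑ a : (GaloisField 2 n), ∑ b : (GaloisField 2 n),
            chi n (b * (F x₀ + F x + F y + F z) + a * (x₀ + x + y + z)) :=
          Finset.sum_congr rfl fun x _ => Finset.sum_congr rfl fun y _ => swap3 _
      _ = ∑ x : (GaloisField 2 n), ∑ y : (GaloisField 2 n), ∑ z : (GaloisField 2 n),
            (if x₀ + x + y + z = 0 then q else 0) *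
              (if F x₀ + F x + F y + F z = 0 then q else 0) :=
          Finset.sum_congr rfl fun x _ => Finset.sum_congr rfl fun y _ =>
            Finset.sum_congr rfl fun z _ => inner _ _
      _ = ∑ x : (GaloisField 2 n), ∑ y : (GaloisField 2 n), ∑ z : (GaloisField 2 n),
            (if z = x₀ + x + y then
              (q * if F x₀ + F x + F y + F z = 0 then q else 0) else 0) := by
          refine Finset.sum_congr rfl fun x _ => Finset.sum_congr rfl fun y _ =>
            Finset.sum_congr rfl fun z _ => ?_
          have hcond : (x₀ + x + y + z = 0) ↔ (z = x₀ + x + y) := by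
            rw [char2_add_eq_zero, eq_comm]
          by_cases h : z = x₀ + x + y
          · rw [if_pos (hcond.mpr h), if_pos h]
          · rw [if_neg (fun hh => h (hcond.mp hh)), if_neg h, zero_mul]
      _ = ∑ x : (GaloisField 2 n), ∑ y : (GaloisField 2 n),
            (q * if F x₀ + F x + F y + F (x₀ + x + y) = 0 then q else 0) := by
          refine Finset.sum_congr rfl fun x _ => Finset.sum_congr rfl fun y _ => ?_
          rw [Finset.sum_ite_eq' Finset.univ (x₀ + x + y)
            (fun z => q * if F x₀ + F x + F y + F z = 0 then q else 0),
            if_pos (Finset.mem_univ _)]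
      _ = q ^ 2 * ∑ x : (GaloisField 2 n), ∑ y : (GaloisField 2 n),
            (if F x₀ + F x + F y + F (x₀ + x + y) = 0 then (1 : ℤ) else 0) := by
          rw [Finset.mul_sum]
          refine Finset.sum_congr rfl fun x _ => ?_
          rw [Finset.mul_sum]
          refine Finset.sum_congr rfl fun y _ => ?_
          by_cases h : F x₀ + F x + F y + F (x₀ + x + y) = 0
          · simp [h]; ring
          · simp [h]
  -- trivial solutions are always solutions
  have triv_sol : ∀ x y : (GaloisField 2 n), (x₀ + x) * (x₀ + y) * (x + y) = 0 →
      F x₀ + F x + F y + F (x₀ + x + y) = 0 := by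
    intro x y h
    rcases mul_eq_zero.mp h with h | h
    · rcases mul_eq_zero.mp h with h | h
      · have hx : x = x₀ := ((char2_add_eq_zero n _ _).mp h).symm
        rw [hx]
        have harg : x₀ + x₀ + y = y := by
          linear_combination CharTwo.add_self_eq_zero x₀
        rw [harg]
        linear_combination CharTwo.add_self_eq_zero (F x₀) + CharTwo.add_self_eq_zero (F y)
      · have hy : y = x₀ := ((char2_add_eq_zero n _ _).mp h).symm
        rw [hy]
        have harg : x₀ + x + x₀ = x := by
          linear_combination CharTwo.add_self_eq_zero x₀
        rw [harg]
        linear_combination CharTwo.add_self_eq_zero (F x₀) + CharTwo.add_self_eq_zero (F x)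
    · have hxy : y = x := ((char2_add_eq_zero n _ _).mp h).symm
      rw [hxy]
      have harg : x₀ + x + x = x₀ := by
        linear_combination CharTwo.add_self_eq_zero x
      rw [harg]
      linear_combination CharTwo.add_self_eq_zero (F x₀) + CharTwo.add_self_eq_zero (F x)
  have triv_iff : ∀ x y : (GaloisField 2 n),
      (x₀ + x) * (x₀ + y) * (x + y) = 0 ↔ (x = x₀ ∨ y = x₀ ∨ y = x) := by
    intro x y
    rw [mul_eq_zero, mul_eq_zero, char2_add_eq_zero, char2_add_eq_zero, char2_add_eq_zero]
    constructor
    · rintro ((h | h) | h)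
      · exact Or.inl h.symm
      · exact Or.inr (Or.inl h.symm)
      · exact Or.inr (Or.inr h.symm)
    · rintro (h | h | h)
      · exact Or.inl (Or.inl h.symm)
      · exact Or.inl (Or.inr h.symm)
      · exact Or.inr h.symm
  have hcard : ((Fintype.card (GaloisField 2 n) : ℤ)) = q := by
    rw [card_gf n hn]; push_cast; rfl
  -- count of trivial solutions
  have count_triv :
      (∑ x : (GaloisField 2 n), ∑ y : (GaloisField 2 n), (if (x₀ + x) * (x₀ + y) * (x + y) = 0 then (1 : ℤ) else 0))
        = 3 * q - 2 := by
    have inner_count : ∀ x : (GaloisField 2 n),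
        (∑ y : (GaloisField 2 n), (if (x₀ + x) * (x₀ + y) * (x + y) = 0 then (1 : ℤ) else 0))
          = if x = x₀ then q else 2 := by
      intro x
      by_cases hx : x = x₀
      · rw [if_pos hx, hx]
        have htr : ∀ y : (GaloisField 2 n), (x₀ + x₀) * (x₀ + y) * (x₀ + y) = 0 := by
          intro y
          rw [self0 x₀, zero_mul, zero_mul]
        calc (∑ y : (GaloisField 2 n), (if (x₀ + x₀) * (x₀ + y) * (x₀ + y) = 0 then (1 : ℤ) else 0))
            = ∑ _y : (GaloisField 2 n), (1 : ℤ) := Finset.sum_congr rfl fun y _ => if_pos (htr y)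
          _ = q := by
              rw [Finset.sum_const, Finset.card_univ, nsmul_eq_mul, mul_one, hcard]
      · rw [if_neg hx]
        have key : ∀ y : (GaloisField 2 n),
            (if (x₀ + x) * (x₀ + y) * (x + y) = 0 then (1 : ℤ) else 0)
              = (if y = x₀ then (1 : ℤ) else 0) + (if y = x then (1 : ℤ) else 0) := by
          intro y
          rw [triv_iff]
          have hx' : ¬ x₀ = x := fun hh => hx hh.symm
          by_cases h1 : y = x₀
          · by_cases h2 : y = x
            · exact absurd (h2.symm.trans h1) hx
            · simp [hx, hx', h1, h2]
          · by_cases h2 : y = x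
            · simp [hx, hx', h1, h2]
            · simp [hx, hx', h1, h2]
        calc (∑ y : (GaloisField 2 n), (if (x₀ + x) * (x₀ + y) * (x + y) = 0 then (1 : ℤ) else 0))
            = ∑ y : (GaloisField 2 n), ((if y = x₀ then (1 : ℤ) else 0) + (if y = x then (1 : ℤ) else 0)) :=
              Finset.sum_congr rfl fun y _ => key y
          _ = (∑ y : (GaloisField 2 n), (if y = x₀ then (1 : ℤ) else 0))
              + ∑ y : (GaloisField 2 n), (if y = x then (1 : ℤ) else 0) := Finset.sum_add_distrib
          _ = 2 := by
              rw [Finset.sum_ite_eq' Finset.univ x₀ (fun _ => (1 : ℤ)),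
                Finset.sum_ite_eq' Finset.univ x (fun _ => (1 : ℤ)),
                if_pos (Finset.mem_univ _), if_pos (Finset.mem_univ _)]
              ring
    calc (∑ x : (GaloisField 2 n), ∑ y : (GaloisField 2 n), (if (x₀ + x) * (x₀ + y) * (x + y) = 0 then (1 : ℤ) else 0))
        = ∑ x : (GaloisField 2 n), (if x = x₀ then q else 2) :=
          Finset.sum_congr rfl fun x _ => inner_count x
      _ = ∑ x : (GaloisField 2 n), ((2 : ℤ) + if x = x₀ then q - 2 else 0) := by
          refine Finset.sum_congr rfl fun x _ => ?_
          by_cases h : x = x₀ <;> simp [h]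
      _ = 3 * q - 2 := by
          rw [Finset.sum_add_distrib, Finset.sum_const, Finset.card_univ,
            Finset.sum_ite_eq' Finset.univ x₀ (fun _ => (q - 2 : ℤ)),
            if_pos (Finset.mem_univ _), nsmul_eq_mul, hcard]
          ring
  -- the right-hand side in terms of q
  have rhs_eq : (2 : ℤ) ^ (2 * n + 1) * (3 * 2 ^ (n - 1) - 1) = q ^ 2 * (3 * q - 2) := by
    obtain ⟨m, rfl⟩ : ∃ m, n = m + 1 := ⟨n - 1, by omega⟩
    simp only [Nat.add_sub_cancel, hq]
    rw [show 2 * (m + 1) + 1 = m + m + 3 from by ring]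
    rw [pow_add, pow_add, pow_add]
    ring
  have hq2 : (q ^ 2 : ℤ) ≠ 0 := by positivity
  -- indicator comparison
  have hle : ∀ x y : (GaloisField 2 n),
      (if (x₀ + x) * (x₀ + y) * (x + y) = 0 then (1 : ℤ) else 0)
        ≤ (if F x₀ + F x + F y + F (x₀ + x + y) = 0 then (1 : ℤ) else 0) := by
    intro x y
    by_cases h : (x₀ + x) * (x₀ + y) * (x + y) = 0
    · rw [if_pos h, if_pos (triv_sol x y h)]
    · rw [if_neg h]
      split_ifs <;> norm_num
  have sum_iff :
      ((∑ x : (GaloisField 2 n), ∑ y : (GaloisField 2 n),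
          (if F x₀ + F x + F y + F (x₀ + x + y) = 0 then (1 : ℤ) else 0))
        = ∑ x : (GaloisField 2 n), ∑ y : (GaloisField 2 n),
          (if (x₀ + x) * (x₀ + y) * (x + y) = 0 then (1 : ℤ) else 0))
      ↔ ∀ x y : (GaloisField 2 n), F x₀ + F x + F y + F (x₀ + x + y) = 0 →
          (x₀ + x) * (x₀ + y) * (x + y) = 0 := by
    have hN : (∑ x : (GaloisField 2 n), ∑ y : (GaloisField 2 n),
          (if F x₀ + F x + F y + F (x₀ + x + y) = 0 then (1 : ℤ) else 0))
        = ∑ p : (GaloisField 2 n) × (GaloisField 2 n),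
          (if F x₀ + F p.1 + F p.2 + F (x₀ + p.1 + p.2) = 0 then (1 : ℤ) else 0) := by
      rw [Fintype.sum_prod_type]
    have hM : (∑ x : (GaloisField 2 n), ∑ y : (GaloisField 2 n),
          (if (x₀ + x) * (x₀ + y) * (x + y) = 0 then (1 : ℤ) else 0))
        = ∑ p : (GaloisField 2 n) × (GaloisField 2 n),
          (if (x₀ + p.1) * (x₀ + p.2) * (p.1 + p.2) = 0 then (1 : ℤ) else 0) := by
      rw [Fintype.sum_prod_type]
    rw [hN, hM, eq_comm,
      Finset.sum_eq_sum_iff_of_le (fun p _ => hle p.1 p.2)]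
    constructor
    · intro h x y hs
      have := h (x, y) (Finset.mem_univ _)
      by_contra ht
      rw [if_neg ht, if_pos hs] at this
      norm_num at this
    · intro h p _
      by_cases ht : (x₀ + p.1) * (x₀ + p.2) * (p.1 + p.2) = 0
      · rw [if_pos ht, if_pos (triv_sol _ _ ht)]
      · rw [if_neg ht, if_neg (fun hs => ht (h p.1 p.2 hs))]
  rw [step1, rhs_eq, mul_right_inj' hq2, ← count_triv, sum_iff]
  exact Iff.rfl
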